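/- For the space H(N) of N×N Hermitian positive-definite matrices with its invariant metric, the Gaussian normalising factor equals Z(σ) = (ω₂(N)/2^{N²}) (2πσ²)^{N/2} exp(((N³−N)/6) σ²) ∏_{n=1}^{N−1} (1 − e^{−nσ²})^{N−n}, where ω₂(N) = (2π)^{(N²−N)/2} / (1!·2!···(N−1)!). -/

import Mathlib

open MeasureTheory

/-- The Stieltjes–Wigert weight `ρ(u,k) = exp(−log²(u)/k)`. -/
noncomputable def swRho (u k : ℝ) : ℝ := Real.exp (-(Real.log u) ^ 2 / k)

/-- The Vandermonde determinant `V(u) = ∏_{i<j} (u_j − u_i)`. -/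
noncomputable def vandermonde {N : ℕ} (u : Fin N → ℝ) : ℝ :=
  ∏ p ∈ Finset.univ.filter (fun p : Fin N × Fin N => p.1 < p.2), (u p.2 - u p.1)

/-- `ω₂(N) = (2π)^{(N²−N)/2} / (1!·2!⋯(N−1)!)`. -/
noncomputable def omega2 (N : ℕ) : ℝ :=
  (2 * Real.pi) ^ ((N ^ 2 - N) / 2) / ∏ k ∈ Finset.range N, (Nat.factorial k : ℝ)

open Real Finset

noncomputable def mom (σ : ℝ) (k : ℕ) : ℝ :=
  Real.sqrt (2 * Real.pi) * σ * Real.exp (((k : ℝ) + 1) ^ 2 * σ ^ 2 / 2)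

lemma exp_quad_eq (σ : ℝ) (hσ : 0 < σ) (k : ℕ) (x : ℝ) :
    Real.exp x * (Real.exp (-x ^ 2 / (2 * σ ^ 2)) * Real.exp x ^ k)
      = Real.exp (((k : ℝ) + 1) ^ 2 * σ ^ 2 / 2) *
        Real.exp (-(1 / (2 * σ ^ 2)) * (x - ((k : ℝ) + 1) * σ ^ 2) ^ 2) := by
  rw [← Real.exp_nat_mul, ← Real.exp_add, ← Real.exp_add, ← Real.exp_add]
  congr 1
  have h : σ ^ 2 ≠ 0 := by positivity
  field_simp
  ring

lemma integrable_quad (σ : ℝ) (hσ : 0 < σ) (k : ℕ) :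
    Integrable (fun x : ℝ => Real.exp x * (Real.exp (-x ^ 2 / (2 * σ ^ 2)) * Real.exp x ^ k)) := by
  have hb : (0:ℝ) < 1 / (2 * σ ^ 2) := by positivity
  have h1 : Integrable (fun x : ℝ => Real.exp (-(1 / (2 * σ ^ 2)) * x ^ 2)) :=
    integrable_exp_neg_mul_sq hb
  have h2 := (h1.comp_sub_right (((k : ℝ) + 1) * σ ^ 2)).const_mul
      (Real.exp (((k : ℝ) + 1) ^ 2 * σ ^ 2 / 2))
  refine h2.congr ?_
  filter_upwards with x
  exact (exp_quad_eq σ hσ k x).symm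

lemma integral_quad (σ : ℝ) (hσ : 0 < σ) (k : ℕ) :
    (∫ x : ℝ, Real.exp x * (Real.exp (-x ^ 2 / (2 * σ ^ 2)) * Real.exp x ^ k)) = mom σ k := by
  have hb : (0:ℝ) < 1 / (2 * σ ^ 2) := by positivity
  simp_rw [exp_quad_eq σ hσ k]
  rw [integral_const_mul, integral_sub_right_eq_self
      (fun x => Real.exp (-(1 / (2 * σ ^ 2)) * x ^ 2)) (((k : ℝ) + 1) * σ ^ 2),
    integral_gaussian]
  have : π / (1 / (2 * σ ^ 2)) = 2 * π * σ ^ 2 := by field_simp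
  rw [this, mom]
  rw [show 2 * π * σ ^ 2 = (2 * π) * σ ^ 2 by ring, Real.sqrt_mul (by positivity),
    Real.sqrt_sq hσ.le]
  ring

lemma swRho_moment_integrableOn (σ : ℝ) (hσ : 0 < σ) (k : ℕ) :
    IntegrableOn (fun u : ℝ => swRho u (2 * σ ^ 2) * u ^ k) (Set.Ioi 0) := by
  have himg : Set.Ioi (0:ℝ) = Real.exp '' Set.univ := by
    rw [Set.image_univ, Real.range_exp]
  rw [himg, integrableOn_image_iff_integrableOn_abs_deriv_smul MeasurableSet.univ
      (fun x _ => (Real.hasDerivAt_exp x).hasDerivWithinAt) Real.exp_injective.injOn]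
  rw [IntegrableOn, Measure.restrict_univ]
  refine (integrable_quad σ hσ k).congr ?_
  filter_upwards with x
  simp [swRho, Real.log_exp, abs_of_pos (Real.exp_pos x), smul_eq_mul]

lemma swRho_moment (σ : ℝ) (hσ : 0 < σ) (k : ℕ) :
    (∫ u in Set.Ioi (0:ℝ), swRho u (2 * σ ^ 2) * u ^ k) = mom σ k := by
  have himg : Set.Ioi (0:ℝ) = Real.exp '' Set.univ := by
    rw [Set.image_univ, Real.range_exp]
  rw [himg, integral_image_eq_integral_abs_deriv_smul MeasurableSet.univ
      (fun x _ => (Real.hasDerivAt_exp x).hasDerivWithinAt) Real.exp_injective.injOn]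
  rw [Measure.restrict_univ, ← integral_quad σ hσ k]
  congr 1; ext x
  simp [swRho, Real.log_exp, abs_of_pos (Real.exp_pos x), smul_eq_mul]

-- product over pairs i<j as double product
lemma prod_filter_lt {N : ℕ} (F : Fin N → Fin N → ℝ) :
    ∏ p ∈ Finset.univ.filter (fun p : Fin N × Fin N => p.1 < p.2), F p.1 p.2
      = ∏ i, ∏ j ∈ Finset.Ioi i, F i j := by
  rw [Finset.prod_sigma']
  refine Finset.prod_nbij' (fun p => ⟨p.1, p.2⟩) (fun x => (x.1, x.2)) ?_ ?_ ?_ ?_ ?_ <;>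
    simp [Finset.mem_sigma, Finset.mem_Ioi]

-- swap
lemma prod_Ioi_comm {N : ℕ} (F : Fin N → Fin N → ℝ) :
    ∏ i, ∏ j ∈ Finset.Ioi i, F i j = ∏ j, ∏ i ∈ Finset.Iio j, F i j := by
  rw [Finset.prod_comm']
  intro i j
  simp [Finset.mem_Ioi, Finset.mem_Iio, and_comm]

-- inner reindex: ∏_{i < j} h (j - i) = ∏_{n ∈ Icc 1 j} h n
lemma prod_Iio_sub {N : ℕ} (j : Fin N) (h : ℕ → ℝ) :
    ∏ i ∈ Finset.Iio j, h ((j : ℕ) - (i : ℕ)) = ∏ n ∈ Finset.Icc 1 (j : ℕ), h n := by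
  refine Finset.prod_nbij' (fun i => (j : ℕ) - (i : ℕ))
    (fun n => (⟨(j : ℕ) - n, by omega⟩ : Fin N)) ?_ ?_ ?_ ?_ ?_
  · intro i hi; simp only [Finset.mem_Iio, Fin.lt_def] at hi
    simp only [Finset.mem_Icc]; omega
  · intro n hn; simp only [Finset.mem_Icc] at hn
    simp only [Finset.mem_Iio, Fin.lt_def]; omega
  · intro i hi; simp only [Finset.mem_Iio, Fin.lt_def] at hi
    apply Fin.ext; simp; omega
  · intro n hn; simp only [Finset.mem_Icc] at hn; simp; omega
  · intro i hi; rfl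

lemma prod_range_Icc (N : ℕ) (h : ℕ → ℝ) :
    ∏ j ∈ Finset.range N, ∏ n ∈ Finset.Icc 1 j, h n
      = ∏ n ∈ Finset.Ico 1 N, h n ^ (N - n) := by
  induction N with
  | zero => simp
  | succ N ih =>
    rw [Finset.prod_range_succ, ih]
    rcases Nat.eq_zero_or_pos N with hN | hN
    · subst hN; simp
    have h1 : Finset.Icc 1 N = Finset.Ico 1 (N + 1) := by
      ext n; simp [Nat.lt_succ_iff]
    have h2 : Finset.Ico 1 N ⊆ Finset.Ico 1 (N + 1) := by
      apply Finset.Ico_subset_Ico le_rfl; omega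
    rw [h1, ← Finset.prod_sdiff h2, show Finset.Ico 1 (N+1) \ Finset.Ico 1 N = {N} by
      ext n; simp; omega]
    simp only [Finset.prod_singleton, Nat.sub_self, pow_zero, one_mul]
    rw [mul_comm, mul_assoc, ← Finset.prod_mul_distrib]
    have h3 : ∀ n ∈ Finset.Ico 1 N, h n * h n ^ (N - n) = h n ^ (N + 1 - n) := by
      intro n hn; simp only [Finset.mem_Ico] at hn
      rw [← pow_succ']; congr 1; omega
    rw [Finset.prod_congr rfl h3, ← Finset.prod_sdiff h2, show Finset.Ico 1 (N+1) \ Finset.Ico 1 N = {N} by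
      ext n; simp; omega]
    simp [mul_comm]

-- the fiber lemma
lemma prod_pairs_fiber {N : ℕ} (h : ℕ → ℝ) :
    ∏ i : Fin N, ∏ j ∈ Finset.Ioi i, h ((j : ℕ) - (i : ℕ))
      = ∏ n ∈ Finset.Ico 1 N, h n ^ (N - n) := by
  rw [prod_Ioi_comm]
  rw [Finset.prod_congr rfl (fun j _ => prod_Iio_sub j h)]
  rw [Fin.prod_univ_eq_prod_range (fun j => ∏ n ∈ Finset.Icc 1 j, h n)]
  exact prod_range_Icc N h

-- sums
lemma sum_range_cast (N : ℕ) : ∑ i ∈ Finset.range N, (i : ℝ) = N * (N - 1) / 2 := by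
  induction N with
  | zero => simp
  | succ N ih => rw [Finset.sum_range_succ, ih]; push_cast; ring

lemma sum_range_sq_cast (N : ℕ) :
    ∑ i ∈ Finset.range N, (i : ℝ) ^ 2 = N * (N - 1) * (2 * N - 1) / 6 := by
  induction N with
  | zero => simp
  | succ N ih => rw [Finset.sum_range_succ, ih]; push_cast; ring

variable {N : ℕ}

lemma msPi : MeasurableSet ((Set.univ : Set (Fin N)).pi fun _ => Set.Ioi (0:ℝ)) :=
  MeasurableSet.univ_pi (fun _ => measurableSet_Ioi)

lemma indicator_pi_prod (F : Fin N → ℝ → ℝ) (u : Fin N → ℝ) :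
    ((Set.univ : Set (Fin N)).pi fun _ => Set.Ioi (0:ℝ)).indicator
      (fun u => ∏ i, F i (u i)) u = ∏ i, (Set.Ioi (0:ℝ)).indicator (F i) (u i) := by
  by_cases h : u ∈ (Set.univ : Set (Fin N)).pi fun _ => Set.Ioi (0:ℝ)
  · rw [Set.indicator_of_mem h]
    exact Finset.prod_congr rfl fun i _ => (Set.indicator_of_mem (h i trivial) _).symm
  · rw [Set.indicator_of_notMem h]
    rw [Set.mem_pi] at h
    push_neg at h
    obtain ⟨i, _, hi⟩ := h
    exact (Finset.prod_eq_zero (Finset.mem_univ i) (Set.indicator_of_notMem hi _)).symm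

lemma integrableOn_pi_prod (F : Fin N → ℝ → ℝ) (hF : ∀ i, IntegrableOn (F i) (Set.Ioi 0)) :
    IntegrableOn (fun u : Fin N → ℝ => ∏ i, F i (u i))
      ((Set.univ : Set (Fin N)).pi fun _ => Set.Ioi 0) := by
  rw [← integrable_indicator_iff msPi]
  have h : ∀ i, Integrable (fun v => (Set.Ioi (0:ℝ)).indicator (F i) v) :=
    fun i => (integrable_indicator_iff measurableSet_Ioi).mpr (hF i)
  exact (Integrable.fintype_prod (f := fun i v => (Set.Ioi (0:ℝ)).indicator (F i) v) h).congr
    (by filter_upwards with u; rw [indicator_pi_prod])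

lemma integral_pi_prod (F : Fin N → ℝ → ℝ) :
    (∫ u in (Set.univ : Set (Fin N)).pi fun _ => Set.Ioi (0:ℝ), ∏ i, F i (u i))
      = ∏ i, ∫ v in Set.Ioi (0:ℝ), F i v := by
  rw [← integral_indicator msPi]
  simp_rw [indicator_pi_prod F]
  rw [MeasureTheory.integral_fintype_prod_volume_eq_prod (ι := Fin N)
      (fun i v => (Set.Ioi (0:ℝ)).indicator (F i) v)]
  exact Finset.prod_congr rfl fun i _ => integral_indicator measurableSet_Ioi

lemma vandermonde_det (u : Fin N → ℝ) :
    vandermonde u = (Matrix.vandermonde u).det := by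
  rw [Matrix.det_vandermonde, vandermonde]
  exact prod_filter_lt (fun i j => u j - u i)

lemma vandermonde_sum (u : Fin N → ℝ) :
    vandermonde u = ∑ pp : Equiv.Perm (Fin N),
      ((Equiv.Perm.sign pp : ℤ) : ℝ) * ∏ i, u i ^ ((pp⁻¹ i : Fin N) : ℕ) := by
  rw [vandermonde_det, Matrix.det_apply']
  refine Finset.sum_congr rfl fun pp _ => ?_
  congr 1
  have h := Equiv.prod_comp pp (fun j => u j ^ ((pp⁻¹ j : Fin N) : ℕ))
  simp only [show ∀ x, pp⁻¹ (pp x) = x from fun x => by simp] at h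
  rw [← h]
  exact Finset.prod_congr rfl fun i _ => by simp [Matrix.vandermonde]

set_option maxHeartbeats 1000000

lemma integrand_expand (σ : ℝ) (u : Fin N → ℝ) :
    (∏ i, swRho (u i) (2 * σ ^ 2)) * |vandermonde u| ^ 2
      = ∑ pp : Equiv.Perm (Fin N), ∑ tt : Equiv.Perm (Fin N),
          (((Equiv.Perm.sign pp : ℤ) : ℝ) * ((Equiv.Perm.sign tt : ℤ) : ℝ)) *
            ∏ i, (swRho (u i) (2 * σ ^ 2) *
              u i ^ (((pp⁻¹ i : Fin N) : ℕ) + ((tt⁻¹ i : Fin N) : ℕ))) := by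
  have h2 : |vandermonde u| ^ 2
      = (∑ pp : Equiv.Perm (Fin N),
          ((Equiv.Perm.sign pp : ℤ) : ℝ) * ∏ i, u i ^ ((pp⁻¹ i : Fin N) : ℕ)) *
        (∑ tt : Equiv.Perm (Fin N),
          ((Equiv.Perm.sign tt : ℤ) : ℝ) * ∏ i, u i ^ ((tt⁻¹ i : Fin N) : ℕ)) := by
    rw [sq_abs, vandermonde_sum]; ring
  rw [h2, Finset.sum_mul_sum, Finset.mul_sum]
  refine Finset.sum_congr rfl fun pp _ => ?_
  rw [Finset.mul_sum]
  refine Finset.sum_congr rfl fun tt _ => ?_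
  have h : ∏ i, (swRho (u i) (2 * σ ^ 2) *
        u i ^ (((pp⁻¹ i : Fin N) : ℕ) + ((tt⁻¹ i : Fin N) : ℕ)))
      = (∏ i, swRho (u i) (2 * σ ^ 2)) *
        ((∏ i, u i ^ ((pp⁻¹ i : Fin N) : ℕ)) * (∏ i, u i ^ ((tt⁻¹ i : Fin N) : ℕ))) := by
    simp_rw [pow_add]
    rw [Finset.prod_mul_distrib, Finset.prod_mul_distrib]
  rw [h]
  ring

lemma perm_sum_det (m : ℕ → ℝ) :
    (∑ pp : Equiv.Perm (Fin N), ∑ tt : Equiv.Perm (Fin N),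
      (((Equiv.Perm.sign pp : ℤ) : ℝ) * ((Equiv.Perm.sign tt : ℤ) : ℝ)) *
        ∏ i, m (((pp⁻¹ i : Fin N) : ℕ) + ((tt⁻¹ i : Fin N) : ℕ)))
    = (Nat.factorial N : ℝ) *
        Matrix.det (Matrix.of fun i j : Fin N => m ((i : ℕ) + (j : ℕ))) := by
  have h1 : ∀ f : Equiv.Perm (Fin N) → ℝ, (∑ pp, f pp⁻¹) = ∑ pp, f pp := fun f =>
    Equiv.sum_comp (Equiv.inv (Equiv.Perm (Fin N))) f
  have key : ∀ (g : Equiv.Perm (Fin N) → Equiv.Perm (Fin N) → ℝ),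
      (∑ pp, ∑ tt, g pp tt) = ∑ pp, ∑ tt, g pp⁻¹ tt⁻¹ := fun g =>
    calc (∑ pp, ∑ tt, g pp tt) = ∑ pp, ∑ tt, g pp tt⁻¹ :=
          Finset.sum_congr rfl fun pp _ => (h1 (g pp)).symm
      _ = ∑ pp, ∑ tt, g pp⁻¹ tt⁻¹ := (h1 (fun pp => ∑ tt, g pp tt⁻¹)).symm
  rw [key (fun pp tt => (((Equiv.Perm.sign pp : ℤ) : ℝ) * ((Equiv.Perm.sign tt : ℤ) : ℝ)) *
    ∏ i, m (((pp⁻¹ i : Fin N) : ℕ) + ((tt⁻¹ i : Fin N) : ℕ)))]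
  simp only [inv_inv, Equiv.Perm.sign_inv]
  rw [Finset.sum_comm]
  have hsq : ∀ tt : Equiv.Perm (Fin N),
      ((Equiv.Perm.sign tt : ℤ) : ℝ) * ((Equiv.Perm.sign tt : ℤ) : ℝ) = 1 := by
    intro tt
    rcases Int.units_eq_one_or (Equiv.Perm.sign tt) with h | h <;> rw [h] <;> norm_num
  have htt : ∀ tt : Equiv.Perm (Fin N),
      (∑ pp : Equiv.Perm (Fin N),
        (((Equiv.Perm.sign pp : ℤ) : ℝ) * ((Equiv.Perm.sign tt : ℤ) : ℝ)) *
          ∏ i, m (((pp i : Fin N) : ℕ) + ((tt i : Fin N) : ℕ)))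
      = Matrix.det (Matrix.of fun i j : Fin N => m ((i : ℕ) + (j : ℕ))) := by
    intro tt
    have hp : ∀ pp : Equiv.Perm (Fin N),
        (∏ i, m (((pp i : Fin N) : ℕ) + ((tt i : Fin N) : ℕ)))
          = ∏ i, m (((pp (tt⁻¹ i) : Fin N) : ℕ) + (i : ℕ)) := by
      intro pp
      have h := Equiv.prod_comp tt (fun j => m (((pp (tt⁻¹ j) : Fin N) : ℕ) + (j : ℕ)))
      simp only [show ∀ x, tt⁻¹ (tt x) = x from fun x => by simp] at h
      exact h
    simp_rw [hp]
    have hs := Equiv.sum_comp (Equiv.mulRight tt)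
      (fun rr : Equiv.Perm (Fin N) =>
        (((Equiv.Perm.sign rr : ℤ) : ℝ) * ((Equiv.Perm.sign tt : ℤ) : ℝ)) *
          ∏ i, m (((rr (tt⁻¹ i) : Fin N) : ℕ) + (i : ℕ)))
    rw [← hs, Matrix.det_apply']
    refine Finset.sum_congr rfl fun rr _ => ?_
    have hsgn : ((Equiv.Perm.sign (rr * tt) : ℤ) : ℝ)
        = ((Equiv.Perm.sign rr : ℤ) : ℝ) * ((Equiv.Perm.sign tt : ℤ) : ℝ) := by
      rw [Equiv.Perm.sign_mul]; push_cast; ring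
    simp only [Equiv.coe_mulRight]
    rw [hsgn]
    have hP : (∏ x : Fin N, m (((rr * tt) (tt⁻¹ x) : ℕ) + (x : ℕ)))
        = ∏ i : Fin N, Matrix.of (fun i j : Fin N => m ((i : ℕ) + (j : ℕ))) (rr i) i :=
      Finset.prod_congr rfl fun i _ => by simp [Equiv.Perm.mul_apply]
    rw [hP]
    have helper : ∀ a b c : ℝ, b * b = 1 → a * b * b * c = a * c := by
      intro a b c h
      calc a * b * b * c = a * c * (b * b) := by ring
        _ = a * c := by rw [h, mul_one]
    exact helper _ _ _ (hsq tt)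
  have hfin : (∑ tt : Equiv.Perm (Fin N), ∑ pp : Equiv.Perm (Fin N),
      ((Equiv.Perm.sign pp : ℤ) : ℝ) * ((Equiv.Perm.sign tt : ℤ) : ℝ) *
        ∏ i, m ((pp i : ℕ) + (tt i : ℕ)))
      = ∑ _tt : Equiv.Perm (Fin N),
          Matrix.det (Matrix.of fun i j : Fin N => m ((i : ℕ) + (j : ℕ))) :=
    Finset.sum_congr rfl fun tt _ => htt tt
  rw [hfin, Finset.sum_const, Finset.card_univ, Fintype.card_perm, Fintype.card_fin,
    nsmul_eq_mul]

lemma heine (σ : ℝ) (hσ : 0 < σ) :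
    (∫ u in (Set.univ : Set (Fin N)).pi (fun _ => Set.Ioi (0 : ℝ)),
        (∏ i, swRho (u i) (2 * σ ^ 2)) * |vandermonde u| ^ 2)
      = (Nat.factorial N : ℝ) *
        Matrix.det (Matrix.of fun i j : Fin N => mom σ ((i : ℕ) + (j : ℕ))) := by
  have hint : ∀ pp tt : Equiv.Perm (Fin N), IntegrableOn
      (fun u : Fin N → ℝ => (((Equiv.Perm.sign pp : ℤ) : ℝ) * ((Equiv.Perm.sign tt : ℤ) : ℝ)) *
        ∏ i, (swRho (u i) (2 * σ ^ 2) * u i ^ (((pp⁻¹ i : Fin N) : ℕ) + ((tt⁻¹ i : Fin N) : ℕ))))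
      ((Set.univ : Set (Fin N)).pi (fun _ => Set.Ioi (0 : ℝ))) := fun pp tt =>
    (integrableOn_pi_prod
      (fun i v => swRho v (2 * σ ^ 2) * v ^ (((pp⁻¹ i : Fin N) : ℕ) + ((tt⁻¹ i : Fin N) : ℕ)))
      (fun i => swRho_moment_integrableOn σ hσ _)).const_mul _
  have e2 : ∀ pp : Equiv.Perm (Fin N),
      (∫ u in (Set.univ : Set (Fin N)).pi (fun _ => Set.Ioi (0 : ℝ)),
          ∑ tt : Equiv.Perm (Fin N),
            (((Equiv.Perm.sign pp : ℤ) : ℝ) * ((Equiv.Perm.sign tt : ℤ) : ℝ)) *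
              ∏ i, (swRho (u i) (2 * σ ^ 2) *
                u i ^ (((pp⁻¹ i : Fin N) : ℕ) + ((tt⁻¹ i : Fin N) : ℕ))))
        = ∑ tt : Equiv.Perm (Fin N),
            (((Equiv.Perm.sign pp : ℤ) : ℝ) * ((Equiv.Perm.sign tt : ℤ) : ℝ)) *
              ∏ i, mom σ (((pp⁻¹ i : Fin N) : ℕ) + ((tt⁻¹ i : Fin N) : ℕ)) := by
    intro pp
    rw [integral_finset_sum _ (fun tt _ => hint pp tt)]
    refine Finset.sum_congr rfl fun tt _ => ?_
    rw [integral_const_mul, integral_pi_prod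
      (fun i v => swRho v (2 * σ ^ 2) * v ^ (((pp⁻¹ i : Fin N) : ℕ) + ((tt⁻¹ i : Fin N) : ℕ)))]
    congr 1
    exact Finset.prod_congr rfl fun i _ => swRho_moment σ hσ _
  simp_rw [integrand_expand σ]
  rw [integral_finset_sum _ (fun pp _ => integrable_finset_sum _ (fun tt _ => hint pp tt))]
  exact (Finset.sum_congr rfl fun pp _ => e2 pp).trans (perm_sum_det (mom σ))

lemma sum_Ioi_comm (F : Fin N → Fin N → ℝ) :
    ∑ i, ∑ j ∈ Finset.Ioi i, F i j = ∑ j, ∑ i ∈ Finset.Iio j, F i j := by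
  rw [Finset.sum_comm']
  intro i j
  simp [Finset.mem_Ioi, Finset.mem_Iio, and_comm]

lemma sum_range_mul_self (n : ℕ) :
    ∑ i ∈ Finset.range n, (i : ℝ) * (i : ℝ) = n * (n - 1) * (2 * n - 1) / 6 := by
  induction n with
  | zero => simp
  | succ n ih => rw [Finset.sum_range_succ, ih]; push_cast; ring

lemma S2_eq : (∑ i : Fin N, ∑ j ∈ Finset.Ioi i, ((j : ℕ) : ℝ))
    = (N : ℝ) * (N - 1) * (2 * N - 1) / 6 := by
  rw [sum_Ioi_comm (fun i j => ((j : ℕ) : ℝ))]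
  have h : ∀ j : Fin N, (∑ _i ∈ Finset.Iio j, ((j : ℕ) : ℝ)) = ((j : ℕ) : ℝ) * ((j : ℕ) : ℝ) := by
    intro j
    rw [Finset.sum_const, nsmul_eq_mul]
    congr 1
    simp
  trans (∑ j : Fin N, ((j : ℕ) : ℝ) * ((j : ℕ) : ℝ))
  · exact Finset.sum_congr rfl fun j _ => h j
  · rw [Fin.sum_univ_eq_sum_range (fun j => (j : ℝ) * (j : ℝ))]
    exact sum_range_mul_self N

lemma sum_fin_one_sq (σ : ℝ) : (∑ i : Fin N, (1 + (i : ℝ) ^ 2 + 2 * (i : ℝ)))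
    = (N : ℝ) + (N : ℝ) * (N - 1) * (2 * N - 1) / 6 + (N : ℝ) * (N - 1) := by
  rw [Fin.sum_univ_eq_sum_range (fun i => (1 + (i : ℝ) ^ 2 + 2 * (i : ℝ)))]
  rw [Finset.sum_add_distrib, Finset.sum_add_distrib, Finset.sum_const, Finset.card_range,
    sum_range_sq_cast, ← Finset.mul_sum, sum_range_cast]
  push_cast; ring

lemma sum_fin_sq (σ : ℝ) : (∑ i : Fin N, ((i : ℝ) ^ 2 + 2 * (i : ℝ)))
    = (N : ℝ) * (N - 1) * (2 * N - 1) / 6 + (N : ℝ) * (N - 1) := by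
  rw [Fin.sum_univ_eq_sum_range (fun i => ((i : ℝ) ^ 2 + 2 * (i : ℝ)))]
  rw [Finset.sum_add_distrib, sum_range_sq_cast, ← Finset.mul_sum, sum_range_cast]
  ring

lemma det_mom_eq (σ : ℝ) (hσ : 0 < σ) :
    Matrix.det (Matrix.of fun i j : Fin N => mom σ ((i : ℕ) + (j : ℕ)))
      = (Real.sqrt (2 * Real.pi) * σ) ^ N
        * (Real.exp ((∑ i : Fin N, (1 + (i : ℝ) ^ 2 + 2 * (i : ℝ))) * (σ ^ 2 / 2))
        * (Real.exp ((∑ j : Fin N, ((j : ℝ) ^ 2 + 2 * (j : ℝ))) * (σ ^ 2 / 2))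
        * (Real.exp ((∑ i : Fin N, ∑ j ∈ Finset.Ioi i, ((j : ℕ) : ℝ)) * σ ^ 2)
        * ∏ n ∈ Finset.Ico 1 N, (1 - Real.exp (-(n : ℝ) * σ ^ 2)) ^ (N - n)))) := by
  set C : ℝ := Real.sqrt (2 * Real.pi) * σ with hC
  set v : Fin N → ℝ := fun i => C * Real.exp ((1 + (i : ℝ) ^ 2 + 2 * (i : ℝ)) * (σ ^ 2 / 2)) with hvdef
  set w : Fin N → ℝ := fun j => Real.exp (((j : ℝ) ^ 2 + 2 * (j : ℝ)) * (σ ^ 2 / 2)) with hwdef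
  set W : Matrix (Fin N) (Fin N) ℝ := Matrix.vandermonde (fun i : Fin N => Real.exp (σ ^ 2) ^ (i : ℕ)) with hWdef
  have hM : (Matrix.of fun i j : Fin N => mom σ ((i : ℕ) + (j : ℕ)))
      = Matrix.of (fun i j : Fin N => v i * (Matrix.of (fun i j : Fin N => w j * W i j)) i j) := by
    ext i j
    simp only [Matrix.of_apply, hvdef, hwdef, hWdef, Matrix.vandermonde, mom]
    rw [← pow_mul, ← Real.exp_nat_mul]
    rw [mul_assoc, mul_assoc, mul_assoc, ← Real.exp_add, ← Real.exp_add]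
    congr 1
    push_cast
    ring
  rw [hM, Matrix.det_mul_column v, Matrix.det_mul_row w, Matrix.det_vandermonde]
  have hv : (∏ i, v i) = C ^ N *
      Real.exp ((∑ i : Fin N, (1 + (i : ℝ) ^ 2 + 2 * (i : ℝ))) * (σ ^ 2 / 2)) := by
    rw [hvdef, Finset.prod_mul_distrib, Finset.prod_const, Finset.card_univ, Fintype.card_fin,
      Finset.sum_mul, Real.exp_sum]
  have hw : (∏ j, w j) = Real.exp ((∑ j : Fin N, ((j : ℝ) ^ 2 + 2 * (j : ℝ))) * (σ ^ 2 / 2)) := by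
    rw [hwdef, Finset.sum_mul, Real.exp_sum]
  have hP : (∏ i : Fin N, ∏ j ∈ Finset.Ioi i,
        (Real.exp (σ ^ 2) ^ (j : ℕ) - Real.exp (σ ^ 2) ^ (i : ℕ)))
      = Real.exp ((∑ i : Fin N, ∑ j ∈ Finset.Ioi i, ((j : ℕ) : ℝ)) * σ ^ 2)
        * ∏ n ∈ Finset.Ico 1 N, (1 - Real.exp (-(n : ℝ) * σ ^ 2)) ^ (N - n) := by
    trans (∏ i : Fin N, ∏ j ∈ Finset.Ioi i,
        (Real.exp (((j : ℕ) : ℝ) * σ ^ 2) *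
          (1 - Real.exp (-(((((j : ℕ) - (i : ℕ)) : ℕ)) : ℝ) * σ ^ 2))))
    · refine Finset.prod_congr rfl fun i _ => Finset.prod_congr rfl fun j hj => ?_
      have hij : (i : ℕ) < (j : ℕ) := Fin.lt_def.mp (Finset.mem_Ioi.mp hj)
      have hcast : (((((j : ℕ) - (i : ℕ)) : ℕ)) : ℝ) = ((j : ℕ) : ℝ) - ((i : ℕ) : ℝ) := by
        exact_mod_cast Nat.cast_sub (le_of_lt hij)
      rw [← Real.exp_nat_mul, ← Real.exp_nat_mul, hcast, mul_sub, mul_one, ← Real.exp_add]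
      congr 2
      ring
    · rw [Finset.prod_congr rfl
        (fun i (_ : i ∈ Finset.univ) => Finset.prod_mul_distrib), Finset.prod_mul_distrib]
      congr 1
      · rw [Finset.sum_mul, Real.exp_sum]
        refine Finset.prod_congr rfl fun i _ => ?_
        rw [Finset.sum_mul, Real.exp_sum]
      · exact prod_pairs_fiber (fun n => 1 - Real.exp (-(n : ℝ) * σ ^ 2))
  rw [hv, hw, hP]
  ring

/-- For `H(N)`, the Gaussian normalising factor
`Z(σ) = (ω₂(N)/(2^{N²} N!)) e^{−N³σ²/2} ∫_{ℝ₊^N} ∏ᵢ ρ(uᵢ,2σ²) |V(u)|² ∏ duᵢ`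
equals the closed form
`(ω₂(N)/2^{N²}) (2πσ²)^{N/2} exp(((N³−N)/6)σ²) ∏_{n=1}^{N−1}(1 − e^{−nσ²})^{N−n}`. -/
theorem stmt8 (N : ℕ) (hN : 0 < N) (σ : ℝ) (hσ : 0 < σ) :
    (omega2 N / (2 ^ (N ^ 2) * (Nat.factorial N : ℝ))) *
        Real.exp (-(N : ℝ) ^ 3 * σ ^ 2 / 2) *
        (∫ u in (Set.univ : Set (Fin N)).pi (fun _ => Set.Ioi (0 : ℝ)),
          (∏ i, swRho (u i) (2 * σ ^ 2)) * |vandermonde u| ^ 2) =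
      (omega2 N / 2 ^ (N ^ 2)) * (2 * Real.pi * σ ^ 2) ^ ((N : ℝ) / 2) *
        Real.exp (((N : ℝ) ^ 3 - (N : ℝ)) / 6 * σ ^ 2) *
        ∏ n ∈ Finset.Ico 1 N, (1 - Real.exp (-(n : ℝ) * σ ^ 2)) ^ (N - n) := by
  rw [heine σ hσ, det_mom_eq σ hσ]
  have hCN : (Real.sqrt (2 * Real.pi) * σ) ^ N = (2 * Real.pi * σ ^ 2) ^ ((N : ℝ) / 2) := by
    have hpos : (0:ℝ) < 2 * Real.pi * σ ^ 2 := by positivity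
    have h1 : Real.sqrt (2 * Real.pi) * σ = (2 * Real.pi * σ ^ 2) ^ ((1:ℝ)/2) := by
      rw [← Real.sqrt_eq_rpow, show (2 * Real.pi * σ ^ 2) = (2 * Real.pi) * σ ^ 2 by ring,
        Real.sqrt_mul (by positivity : (0:ℝ) ≤ 2 * Real.pi) (σ ^ 2), Real.sqrt_sq hσ.le]
    rw [h1, ← Real.rpow_natCast ((2 * Real.pi * σ ^ 2) ^ ((1:ℝ)/2)) N,
      ← Real.rpow_mul hpos.le]
    congr 1
    ring
  have hexp : Real.exp (-(N : ℝ) ^ 3 * σ ^ 2 / 2)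
      * (Real.exp ((∑ i : Fin N, (1 + (i : ℝ) ^ 2 + 2 * (i : ℝ))) * (σ ^ 2 / 2))
      * (Real.exp ((∑ j : Fin N, ((j : ℝ) ^ 2 + 2 * (j : ℝ))) * (σ ^ 2 / 2))
      * Real.exp ((∑ i : Fin N, ∑ j ∈ Finset.Ioi i, ((j : ℕ) : ℝ)) * σ ^ 2)))
      = Real.exp (((N : ℝ) ^ 3 - (N : ℝ)) / 6 * σ ^ 2) := by
    rw [← Real.exp_add, ← Real.exp_add, ← Real.exp_add, sum_fin_one_sq σ, sum_fin_sq σ, S2_eq]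
    congr 1
    ring
  have hfac : (Nat.factorial N : ℝ) ≠ 0 := Nat.cast_ne_zero.mpr (Nat.factorial_ne_zero N)
  rw [hCN, ← hexp]
  field_simp
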